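/- Let n ≥ 3 and A, B, C, D integers with A and D odd, and set Δ = AC − B². If Δ ≡ 3 or 7 (mod 8), then the equation Ax² + 2Bxy + Cy² ≡ D (mod 2ⁿ) has exactly 2ⁿ solutions (x,y) in (ℤ/2ⁿℤ)². -/

import Mathlib

open Finset
namespace CQ37

variable (A B C D : ℤ)

def F {R : Type*} [CommRing R] (p : R × R) : R :=
  (A : R) * p.1 ^ 2 + 2 * (B : R) * p.1 * p.2 + (C : R) * p.2 ^ 2

lemma map_F {R S : Type*} [CommRing R] [CommRing S] (g : R →+* S) (p : R × R) :
    g (F A B C p) = F A B C (g p.1, g p.2) := by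
  simp [F, map_add, map_mul, map_pow, map_intCast, map_ofNat]

lemma F_add {R : Type*} [CommRing R] (x y e₁ e₂ : R) :
    F A B C (x + e₁, y + e₂) = F A B C (x, y) + (2 * ((A:R) * x + (B:R) * y)) * e₁
      + (2 * ((B:R) * x + (C:R) * y)) * e₂
      + ((A:R) * e₁ ^ 2 + 2 * (B:R) * e₁ * e₂ + (C:R) * e₂ ^ 2) := by
  simp only [F]; ring

def sol (m : ℕ) [NeZero m] : Finset (ZMod m × ZMod m) :=
  univ.filter fun p => F A B C p = (D : ZMod m)

section Levels
variable {n : ℕ}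

instance iNZ : NeZero ((2:ℕ)^n) := ⟨(Nat.two_pow_pos n).ne'⟩

noncomputable def π : ZMod (2^(n+1)) →+* ZMod (2^n) :=
  ZMod.castHom (pow_dvd_pow 2 (Nat.le_succ n)) _

def lift (z : ZMod (2^n)) : ZMod (2^(n+1)) := (z.val : ZMod (2^(n+1)))

lemma pi_lift (z : ZMod (2^n)) : π (lift z) = z := by
  simp [π, lift, map_natCast, ZMod.natCast_val, ZMod.cast_id]

lemma ker_pi {z : ZMod (2^(n+1))} (hz : π z = 0) :
    z = 0 ∨ z = ((2^n : ℕ) : ZMod (2^(n+1))) := by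
  have hv : ((z.val : ℕ) : ZMod (2^(n+1))) = z := ZMod.natCast_rightInverse z
  rw [← hv, π, ZMod.castHom_apply, ZMod.cast_natCast (pow_dvd_pow 2 (Nat.le_succ n)),
    ZMod.natCast_eq_zero_iff] at hz
  obtain ⟨k, hk⟩ := hz
  have hlt : z.val < 2^(n+1) := ZMod.val_lt z
  have hk2 : k < 2 := by
    by_contra h
    push_neg at h
    have : 2^n * 2 ≤ 2^n * k := Nat.mul_le_mul_left _ h
    rw [← pow_succ] at this
    omega
  interval_cases k
  · left; rw [← hv, hk]; simp
  · right; rw [← hv, hk]; simp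

lemma two_pow_ne_zero' : ((2^n : ℕ) : ZMod (2^(n+1))) ≠ 0 := by
  rw [Ne, ZMod.natCast_eq_zero_iff]
  intro h
  have h1 : (2:ℕ)^(n+1) ≤ 2^n := Nat.le_of_dvd (Nat.two_pow_pos n) h
  have h2 : (2:ℕ)^n < 2^(n+1) := Nat.pow_lt_pow_right (by norm_num) (Nat.lt_succ_self n)
  omega

lemma two_pow_add_self : ((2^n : ℕ) : ZMod (2^(n+1))) + ((2^n : ℕ) : ZMod (2^(n+1))) = 0 := by
  rw [← Nat.cast_add]
  have : (2:ℕ)^n + 2^n = 2^(n+1) := by rw [pow_succ]; omega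
  rw [this, ZMod.natCast_self]

lemma ker_two_mul {z : ZMod (2^(n+1))} (hz : π z = 0) : 2 * z = 0 := by
  rcases ker_pi hz with h | h <;> rw [h]
  · ring
  · rw [two_mul]; exact two_pow_add_self

lemma ker_mul_ker (hn : 1 ≤ n) {z w : ZMod (2^(n+1))} (hz : π z = 0) (hw : π w = 0) :
    z * w = 0 := by
  have key : ((2^n : ℕ) : ZMod (2^(n+1))) * ((2^n : ℕ) : ZMod (2^(n+1))) = 0 := by
    rw [← Nat.cast_mul, ← pow_add, ZMod.natCast_eq_zero_iff]
    exact pow_dvd_pow 2 (by omega)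
  rcases ker_pi hz with h | h <;> rcases ker_pi hw with h' | h' <;> rw [h, h'] <;>
    first
      | exact key
      | simp only [zero_mul, mul_zero]


lemma fiber_card (w : ZMod (2^n)) :
    (univ.filter fun z : ZMod (2^(n+1)) => π z = w).card = 2 := by
  have hset : (univ.filter fun z : ZMod (2^(n+1)) => π z = w)
      = {lift w, lift w + ((2^n : ℕ) : ZMod (2^(n+1)))} := by
    ext z
    simp only [mem_filter, mem_univ, true_and, mem_insert, mem_singleton]
    constructor
    · intro hz
      have h0 : π (z - lift w) = 0 := by
        rw [map_sub, pi_lift, hz, sub_self]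
      rcases ker_pi h0 with h | h
      · left; have := sub_eq_zero.mp h; exact this
      · right; rw [← h]; ring
    · rintro (rfl | rfl)
      · exact pi_lift w
      · rw [map_add, pi_lift]
        have : π ((2^n : ℕ) : ZMod (2^(n+1))) = 0 := by
          rw [map_natCast, ZMod.natCast_self]
        rw [this, add_zero]
  rw [hset, Finset.card_pair]
  rw [Ne, left_eq_add]
  exact two_pow_ne_zero'

lemma fiber2_card (p : ZMod (2^n) × ZMod (2^n)) :
    (univ.filter fun q : ZMod (2^(n+1)) × ZMod (2^(n+1)) =>
      π q.1 = p.1 ∧ π q.2 = p.2).card = 4 := by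
  rw [show (univ : Finset (ZMod (2^(n+1)) × ZMod (2^(n+1)))) = univ ×ˢ univ from
    (Finset.univ_product_univ).symm,
    Finset.filter_product (fun a => π a = p.1) (fun b => π b = p.2), Finset.card_product,
    fiber_card, fiber_card]


variable {A B C D}

lemma F_const_fiber (hn : 1 ≤ n) {q q' : ZMod (2^(n+1)) × ZMod (2^(n+1))}
    (h1 : π q.1 = π q'.1) (h2 : π q.2 = π q'.2) :
    F A B C q = F A B C q' := by
  obtain ⟨x, y⟩ := q; obtain ⟨x', y'⟩ := q'
  simp only at h1 h2
  have k1 : π (x - x') = 0 := by rw [map_sub, h1, sub_self]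
  have k2 : π (y - y') = 0 := by rw [map_sub, h2, sub_self]
  have t1 : 2 * (x - x') = 0 := ker_two_mul k1
  have t2 : 2 * (y - y') = 0 := ker_two_mul k2
  have q11 : (x - x') * (x - x') = 0 := ker_mul_ker hn k1 k1
  have q12 : (x - x') * (y - y') = 0 := ker_mul_ker hn k1 k2
  have q22 : (y - y') * (y - y') = 0 := ker_mul_ker hn k2 k2
  have hxy : (x, y) = (x' + (x - x'), y' + (y - y')) := by
    simp
  rw [hxy, F_add]
  linear_combination ((A : ZMod (2^(n+1))) * x' + (B : ZMod (2^(n+1))) * y') * t1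
    + ((B : ZMod (2^(n+1))) * x' + (C : ZMod (2^(n+1))) * y') * t2
    + (A : ZMod (2^(n+1))) * q11 + 2 * (B : ZMod (2^(n+1))) * q12
    + (C : ZMod (2^(n+1))) * q22

variable (A B C D)

/-- Solutions mod `2^n` whose canonical lift solves the congruence mod `2^(n+1)`. -/
def W : Finset (ZMod (2^n) × ZMod (2^n)) :=
  univ.filter fun p => F A B C (lift p.1, lift p.2) = (D : ZMod (2^(n+1)))

lemma stepA (hn : 1 ≤ n) :
    (sol A B C D (2^(n+1))).card = 4 * (W A B C D (n := n)).card := by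
  rw [Finset.card_eq_sum_card_fiberwise
    (f := fun q : ZMod (2^(n+1)) × ZMod (2^(n+1)) => (π q.1, π q.2))
    (t := univ) (fun _ _ => mem_univ _)]
  have hterm : ∀ p : ZMod (2^n) × ZMod (2^n),
      ((sol A B C D (2^(n+1))).filter fun q => (π q.1, π q.2) = p).card
        = if F A B C (lift p.1, lift p.2) = (D : ZMod (2^(n+1))) then 4 else 0 := by
    intro p
    rw [sol, Finset.filter_filter]
    by_cases hQ : F A B C (lift p.1, lift p.2) = (D : ZMod (2^(n+1)))
    · rw [if_pos hQ, ← fiber2_card p]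
      congr 1
      apply Finset.filter_congr
      intro q _
      rw [Prod.ext_iff]
      simp only
      constructor
      · rintro ⟨_, h⟩; exact h
      · rintro ⟨hx, hy⟩
        refine ⟨?_, hx, hy⟩
        rw [F_const_fiber hn (q' := (lift p.1, lift p.2))
          (by simpa [pi_lift] using hx) (by simpa [pi_lift] using hy), hQ]
    · rw [if_neg hQ, Finset.card_eq_zero]
      rw [Finset.filter_eq_empty_iff]
      rintro q - ⟨hq, hΨ⟩
      rw [Prod.ext_iff] at hΨ
      apply hQ
      rw [← F_const_fiber hn (q := q) (q' := (lift p.1, lift p.2))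
        (by simpa [pi_lift] using hΨ.1) (by simpa [pi_lift] using hΨ.2), hq]
  rw [Finset.sum_congr rfl (fun p _ => hterm p), Finset.sum_ite, Finset.sum_const,
    Finset.sum_const, smul_eq_mul, smul_eq_mul, mul_zero, add_zero, mul_comm, W]


lemma parity_mul {z : ZMod (2^(n+1))} (hz : ((z.val : ℕ) : ZMod 2) = 1) :
    ((2^n : ℕ) : ZMod (2^(n+1))) * z = ((2^n : ℕ) : ZMod (2^(n+1))) := by
  have hv : ((z.val : ℕ) : ZMod (2^(n+1))) = z := ZMod.natCast_rightInverse z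
  have hmod : z.val % 2 = 1 := by
    rcases Nat.mod_two_eq_zero_or_one z.val with h | h
    · exfalso
      rw [← ZMod.natCast_mod z.val 2, h] at hz
      simp at hz
    · exact h
  have hval : 2^n * z.val = 2^(n+1) * (z.val / 2) + 2^n := by
    have h2 := Nat.div_add_mod z.val 2
    calc 2^n * z.val = 2^n * (2 * (z.val / 2) + 1) := by congr 1; omega
    _ = 2^(n+1) * (z.val / 2) + 2^n := by ring
  rw [← hv, ← Nat.cast_mul, hval, Nat.cast_add, Nat.cast_mul, ZMod.natCast_self,
    zero_mul, zero_add]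

lemma claim4 : ∀ x y a b c d : ZMod 4,
    (ZMod.castHom (by norm_num : (2:ℕ) ∣ 4) (ZMod 2)) a = 1 →
    (ZMod.castHom (by norm_num : (2:ℕ) ∣ 4) (ZMod 2)) d = 1 →
    a * c - b ^ 2 = 3 →
    a * x^2 + 2*b*x*y + c*y^2 = d →
    (ZMod.castHom (by norm_num : (2:ℕ) ∣ 4) (ZMod 2))
      ((1 + b) * (a*x + b*y) + (b*x + c*y)) = 1 := by decide

def c₁ : ZMod (2^n) := ((2^(n-1) : ℕ) : ZMod (2^n)) * (1 + (B : ZMod (2^n)))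

def c₂ : ZMod (2^n) := ((2^(n-1) : ℕ) : ZMod (2^n))

lemma odd_cast_two {A : ℤ} (hA : Odd A) : ((A : ℤ) : ZMod 2) = 1 := by
  obtain ⟨k, hk⟩ := hA
  rw [hk]
  push_cast
  have : ((2:ℤ) : ZMod 2) = 0 := by decide
  push_cast at this
  rw [this]  -- might fail; adjust
  ring

lemma flip (hn : 3 ≤ n) (hA : Odd A) (hD : Odd D)
    (hΔ4 : ((A * C - B^2 : ℤ) : ZMod 4) = 3)
    {p : ZMod (2^n) × ZMod (2^n)} (hp : p ∈ sol A B C D (2^n)) :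
    F A B C (lift (p.1 + c₁ B), lift (p.2 + c₂))
      = F A B C (lift p.1, lift p.2) + ((2^n : ℕ) : ZMod (2^(n+1))) := by
  have h1n : 1 ≤ n := by omega
  set R := ZMod (2^(n+1))
  set s' : R := ((2^(n-1) : ℕ) : R) with hs'
  have e1 : F A B C (lift (p.1 + c₁ B), lift (p.2 + c₂))
      = F A B C (lift p.1 + s' * (1 + (B : R)), lift p.2 + s') := by
    apply F_const_fiber h1n
    · show π (lift (p.1 + c₁ B)) = π (lift p.1 + s' * (1 + (B:R)))
      rw [pi_lift, map_add, pi_lift, map_mul, map_add, map_one, map_intCast, hs',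
        map_natCast, c₁]
    · show π (lift (p.2 + c₂)) = π (lift p.2 + s')
      rw [pi_lift, map_add, pi_lift, hs', map_natCast, c₂]
  rw [e1, F_add]
  have hss : s' * s' = 0 := by
    rw [hs', ← Nat.cast_mul, ← pow_add, ZMod.natCast_eq_zero_iff]
    exact pow_dvd_pow 2 (by omega)
  have h2s : 2 * s' = ((2^n : ℕ) : R) := by
    rw [hs', show (2 : R) = ((2 : ℕ) : R) by push_cast; ring, ← Nat.cast_mul]
    congr 1
    rw [← pow_succ']
    congr 1
    omega
  -- parity of L
  set x' := lift p.1
  set y' := lift p.2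
  set L : R := (1 + (B:R)) * ((A:R) * x' + (B:R) * y') + ((B:R) * x' + (C:R) * y') with hL
  have hpar : ((2^n : ℕ) : R) * L = ((2^n : ℕ) : R) := by
    apply parity_mul
    have hcast : ((L.val : ℕ) : ZMod 2)
        = (ZMod.castHom (dvd_pow_self 2 (Nat.succ_ne_zero n)) (ZMod 2)) L := by
      rw [ZMod.castHom_apply, ZMod.natCast_val]
    rw [hcast]
    set ρ' := ZMod.castHom (dvd_pow_self 2 (Nat.succ_ne_zero n)) (ZMod 2)
    have hx2 : ρ' x' = ((p.1.val : ℕ) : ZMod 2) := by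
      rw [show x' = ((p.1.val : ℕ) : R) from rfl, map_natCast]
    have hy2 : ρ' y' = ((p.2.val : ℕ) : ZMod 2) := by
      rw [show y' = ((p.2.val : ℕ) : R) from rfl, map_natCast]
    have h4dvd : (4:ℕ) ∣ 2^n := by
      have : (4:ℕ) = 2^2 := rfl
      rw [this]
      exact pow_dvd_pow 2 (by omega)
    set σ := ZMod.castHom h4dvd (ZMod 4)
    have hx4 : σ p.1 = ((p.1.val : ℕ) : ZMod 4) := by
      rw [ZMod.castHom_apply, ZMod.natCast_val]
    have hy4 : σ p.2 = ((p.2.val : ℕ) : ZMod 4) := by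
      rw [ZMod.castHom_apply, ZMod.natCast_val]
    -- the level-4 equation
    rw [sol, mem_filter] at hp
    have heq4 := congrArg σ hp.2
    rw [map_F, map_intCast] at heq4
    have key := claim4 (σ p.1) (σ p.2) (A : ZMod 4) (B : ZMod 4) (C : ZMod 4) (D : ZMod 4)
      (by rw [map_intCast]; exact odd_cast_two hA)
      (by rw [map_intCast]; exact odd_cast_two hD)
      (by push_cast at hΔ4; exact_mod_cast hΔ4)
      (by simpa [F] using heq4)
    -- transport key to ρ' L = 1
    rw [hL]
    simp only [map_add, map_mul, map_one, map_intCast, hx2, hy2]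
    simp only [map_add, map_mul, map_one, map_intCast, hx4, hy4, map_natCast] at key
    exact key
  linear_combination (((A:R) * x' + (B:R) * y') * (1 + (B:R))) * h2s
    + ((B:R) * x' + (C:R) * y') * h2s
    + ((A:R) * (1 + (B:R))^2 + 2 * (B:R) * (1 + (B:R)) + (C:R)) * hss + hpar


lemma pi_F (x y : ZMod (2^n)) :
    π (F A B C (lift x, lift y)) = F A B C (x, y) := by
  rw [map_F]
  simp [pi_lift, map_intCast]

lemma mem_W_iff {p : ZMod (2^n) × ZMod (2^n)} :
    p ∈ W A B C D (n := n) ↔ F A B C (lift p.1, lift p.2) = (D : ZMod (2^(n+1))) := by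
  rw [W, mem_filter]
  simp

lemma W_subset_sol : W A B C D (n := n) ⊆ sol A B C D (2^n) := by
  intro p hp
  rw [mem_W_iff] at hp
  rw [sol, mem_filter]
  refine ⟨mem_univ _, ?_⟩
  have h := congrArg π hp
  rwa [pi_F, map_intCast] at h

lemma stepB (hn : 3 ≤ n) (hA : Odd A) (hD : Odd D)
    (hΔ4 : ((A * C - B^2 : ℤ) : ZMod 4) = 3) :
    (sol A B C D (2^n)).card = 2 * (W A B C D (n := n)).card := by
  classical
  have hTW : ∀ p ∈ sol A B C D (2^n),
      ((p.1 + c₁ B, p.2 + c₂) ∈ sol A B C D (2^n)) ∧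
      ((p.1 + c₁ B, p.2 + c₂) ∈ W A B C D (n := n) ↔ p ∉ W A B C D (n := n)) := by
    intro p hp
    have hpD : F A B C p = (D : ZMod (2^n)) := by
      rw [sol, mem_filter] at hp; exact hp.2
    have hflip := flip A B C D hn hA hD hΔ4 hp
    have hsol' : (p.1 + c₁ B, p.2 + c₂) ∈ sol A B C D (2^n) := by
      rw [sol, mem_filter]
      refine ⟨mem_univ _, ?_⟩
      have h := congrArg π hflip
      rw [pi_F, map_add, pi_F, map_natCast, ZMod.natCast_self, add_zero] at h
      rw [h, hpD]
    refine ⟨hsol', ?_⟩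
    have hker : π (F A B C (lift p.1, lift p.2) - ((D : ℤ) : ZMod (2^(n+1)))) = 0 := by
      rw [map_sub, pi_F, map_intCast, hpD, sub_self]
    have htne := two_pow_ne_zero' (n := n)
    have htt := two_pow_add_self (n := n)
    rw [mem_W_iff, mem_W_iff]
    simp only
    rcases ker_pi hker with h | h
    · -- p ∈ W
      have h0 : F A B C (lift p.1, lift p.2) = ((D : ℤ) : ZMod (2^(n+1))) :=
        sub_eq_zero.mp h
      rw [hflip, h0]
      constructor
      · intro hc
        exact absurd (by rwa [add_eq_left] at hc) htne
      · intro hc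
        exact absurd rfl hc
    · -- p ∉ W
      have h1 : F A B C (lift p.1, lift p.2)
          = ((D : ℤ) : ZMod (2^(n+1))) + ((2^n : ℕ) : ZMod (2^(n+1))) := by
        rw [eq_add_of_sub_eq h]; ring
      rw [hflip, h1]
      constructor
      · intro _ hc
        rw [add_eq_left] at hc
        exact htne hc
      · intro _
        rw [add_assoc, htt, add_zero]
  set T : ZMod (2^n) × ZMod (2^n) → ZMod (2^n) × ZMod (2^n) :=
    fun p => (p.1 + c₁ B, p.2 + c₂) with hTdef
  have hTT : ∀ p, T (T p) = p := by
    intro p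
    have hc1 : c₁ B (n := n) + c₁ B = 0 := by
      rw [c₁, ← add_mul, ← Nat.cast_add]
      have : (2:ℕ)^(n-1) + 2^(n-1) = 2^n := by
        have : (2:ℕ)^n = 2^(n-1) * 2 := by
          rw [← pow_succ]
          congr 1
          omega
        omega
      rw [this, ZMod.natCast_self, zero_mul]
    have hc2 : c₂ (n := n) + c₂ = 0 := by
      rw [c₂, ← Nat.cast_add]
      have : (2:ℕ)^(n-1) + 2^(n-1) = 2^n := by
        have : (2:ℕ)^n = 2^(n-1) * 2 := by
          rw [← pow_succ]
          congr 1
          omega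
        omega
      rw [this, ZMod.natCast_self]
    rw [hTdef]
    ext
    · show p.1 + c₁ B + c₁ B = p.1
      rw [add_assoc, hc1, add_zero]
    · show p.2 + c₂ + c₂ = p.2
      rw [add_assoc, hc2, add_zero]
  have hsplit := Finset.card_filter_add_card_filter_not
    (s := sol A B C D (2^n)) (p := fun p => p ∈ W A B C D (n := n))
  have h1 : (sol A B C D (2^n)).filter (fun p => p ∈ W A B C D (n := n))
      = W A B C D (n := n) := by
    ext p
    rw [mem_filter]
    exact ⟨fun h => h.2, fun h => ⟨W_subset_sol A B C D h, h⟩⟩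
  have h2 : ((sol A B C D (2^n)).filter
      (fun p => ¬ p ∈ W A B C D (n := n))).card = (W A B C D (n := n)).card := by
    apply Finset.card_bij' (i := fun p _ => T p) (j := fun p _ => T p)
    · intro a ha
      rw [mem_filter] at ha
      exact ((hTW a ha.1).2).mpr ha.2
    · intro a ha
      rw [mem_filter]
      have has := W_subset_sol A B C D ha
      refine ⟨(hTW a has).1, ?_⟩
      rw [(hTW a has).2]
      intro hc
      exact hc ha
    · intro a _; exact hTT a
    · intro a _; exact hTT a
  rw [h1, h2] at hsplit
  omega


lemma step (hn : 3 ≤ n) (hA : Odd A) (hD : Odd D)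
    (hΔ4 : ((A * C - B^2 : ℤ) : ZMod 4) = 3) :
    (sol A B C D (2^(n+1))).card = 2 * (sol A B C D (2^n)).card := by
  rw [stepA A B C D (by omega), stepB A B C D hn hA hD hΔ4]
  ring

end Levels

set_option maxHeartbeats 1000000 in
lemma base_count : ∀ a b c d : ZMod 8,
    (ZMod.castHom (by norm_num : (2:ℕ) ∣ 8) (ZMod 2)) a = 1 →
    (ZMod.castHom (by norm_num : (2:ℕ) ∣ 8) (ZMod 2)) d = 1 →
    (a * c - b ^ 2 = 3 ∨ a * c - b ^ 2 = 7) →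
    (univ.filter fun p : ZMod 8 × ZMod 8 =>
      a * p.1^2 + 2*b*p.1*p.2 + c*p.2^2 = d).card = 8 := by decide

lemma base (hA : Odd A) (hD : Odd D)
    (hΔ : (A * C - B ^ 2) % 8 = 3 ∨ (A * C - B ^ 2) % 8 = 7) :
    (sol A B C D 8).card = 8 := by
  have hΔ8 : ((A * C - B^2 : ℤ) : ZMod 8) = 3 ∨ ((A * C - B^2 : ℤ) : ZMod 8) = 7 := by
    rcases hΔ with h | h
    · left
      have : ((A * C - B^2 : ℤ) : ZMod 8) = ((3 : ℤ) : ZMod 8) :=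
        (ZMod.intCast_eq_intCast_iff _ _ _).mpr (show (A * C - B^2) % (8:ℕ) = (3:ℤ) % (8:ℕ) by
          push_cast; omega)
      rw [this]; norm_num
    · right
      have : ((A * C - B^2 : ℤ) : ZMod 8) = ((7 : ℤ) : ZMod 8) :=
        (ZMod.intCast_eq_intCast_iff _ _ _).mpr (show (A * C - B^2) % (8:ℕ) = (7:ℤ) % (8:ℕ) by
          push_cast; omega)
      rw [this]; norm_num
  have hΔ8' : (A : ZMod 8) * (C : ZMod 8) - (B : ZMod 8)^2 = 3
      ∨ (A : ZMod 8) * (C : ZMod 8) - (B : ZMod 8)^2 = 7 := by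
    rcases hΔ8 with h | h
    · left; push_cast at h; exact_mod_cast h
    · right; push_cast at h; exact_mod_cast h
  have h := base_count (A : ZMod 8) (B : ZMod 8) (C : ZMod 8) (D : ZMod 8)
    (by rw [map_intCast]; exact odd_cast_two hA)
    (by rw [map_intCast]; exact odd_cast_two hD)
    hΔ8'
  rw [sol]
  simp only [F]; convert h; ext p
  exact ⟨fun h => mem_filter.mpr ⟨mem_univ _, (mem_filter.mp h).2⟩,
    fun h => mem_filter.mpr ⟨mem_univ _, (mem_filter.mp h).2⟩⟩

lemma card_eq (m : ℕ) [NeZero m] :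
    Nat.card {xy : ZMod m × ZMod m //
        (A : ZMod m) * xy.1 ^ 2 + 2 * (B : ZMod m) * xy.1 * xy.2
          + (C : ZMod m) * xy.2 ^ 2 = (D : ZMod m)} = (sol A B C D m).card := by
  rw [Nat.card_eq_fintype_card, Fintype.card_subtype]
  rfl

end CQ37

theorem count_quadratic_disc_three_seven (n : ℕ) (hn : 3 ≤ n) (A B C D : ℤ)
    (hA : Odd A) (hD : Odd D)
    (hΔ : (A * C - B ^ 2) % 8 = 3 ∨ (A * C - B ^ 2) % 8 = 7) :
    Nat.card {xy : ZMod (2 ^ n) × ZMod (2 ^ n) //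
        (A : ZMod (2 ^ n)) * xy.1 ^ 2 + 2 * (B : ZMod (2 ^ n)) * xy.1 * xy.2
          + (C : ZMod (2 ^ n)) * xy.2 ^ 2 = (D : ZMod (2 ^ n))} = 2 ^ n := by
  have hΔ4 : ((A * C - B^2 : ℤ) : ZMod 4) = 3 := by
    have : ((A * C - B^2 : ℤ) : ZMod 4) = ((3 : ℤ) : ZMod 4) :=
      (ZMod.intCast_eq_intCast_iff _ _ _).mpr (show (A * C - B^2) % (4:ℕ) = (3:ℤ) % (4:ℕ) by
        push_cast; omega)
    rw [this]; norm_num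
  induction n, hn using Nat.le_induction with
  | base =>
    have h8 : (2:ℕ)^3 = 8 := by norm_num
    simp only [h8]
    rw [CQ37.card_eq]
    exact CQ37.base A B C D hA hD hΔ
  | succ n hn ih =>
    rw [CQ37.card_eq, CQ37.step A B C D hn hA hD hΔ4, ← CQ37.card_eq, ih, pow_succ]
    ring
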